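/- Let x_1, ..., x_r be a linear basis of ℝ^r. Then there exist positive integers m_1, ..., m_r such that the vector x = Σ_i m_i x_i satisfies ⟨x, x_i⟩ > 0 for all i = 1, ..., r. -/

import Mathlib

/-- Lemma 3.8 (posvector): if `x 1, ..., x r` is a linear basis of `ℝ^r`, there exist
positive integers `m i` such that `x = ∑ i, m i • x i` satisfies `⟪x, x i⟫ > 0` for all `i`. -/
theorem stmt_0 (r : ℕ) (x : Module.Basis (Fin r) ℝ (EuclideanSpace ℝ (Fin r))) :
    ∃ m : Fin r → ℕ, (∀ i, 0 < m i) ∧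
      ∀ i, 0 < (inner ℝ (∑ j, (m j : ℝ) • (x j : EuclideanSpace ℝ (Fin r))) (x i) : ℝ) := by
  rcases Nat.eq_zero_or_pos r with hr | hr
  · subst hr; exact ⟨fun _ => 1, fun i => i.elim0, fun i => i.elim0⟩
  set E := EuclideanSpace ℝ (Fin r)
  set a : Fin r → Fin r → ℝ := fun j i => inner ℝ (x j) (x i) with ha
  set F : (Fin r → ℝ) → Fin r → ℝ := fun c i => ∑ j, c j * a j i with hF
  have hinner : ∀ (c : Fin r → ℝ) (i : Fin r),
      (inner ℝ (∑ j, c j • (x j : E)) (x i) : ℝ) = F c i := by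
    intro c i
    rw [sum_inner]
    exact Finset.sum_congr rfl fun j _ => real_inner_smul_left _ _ _
  -- nearest point to 0 in the convex hull of the basis vectors
  set K : Set E := convexHull ℝ (Set.range ⇑x) with hKdef
  have hne : K.Nonempty := ⟨x ⟨0, hr⟩, subset_convexHull ℝ _ (Set.mem_range_self _)⟩
  obtain ⟨v, hvK, hv⟩ := exists_norm_eq_iInf_of_complete_convex hne
    ((Set.finite_range ⇑x).isCompact_convexHull ℝ).isComplete (convex_convexHull ℝ _) (0 : E)
  have hvar := (norm_eq_iInf_iff_real_inner_le_zero (convex_convexHull ℝ _) hvK).mp hv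
  have hvi : ∀ i, (inner ℝ v v : ℝ) ≤ inner ℝ v (x i) := by
    intro i
    have h := hvar (x i) (subset_convexHull ℝ _ (Set.mem_range_self i))
    have heq : (inner ℝ (0 - v) ((x i : E) - v) : ℝ) = -(inner ℝ v (x i)) + inner ℝ v v := by
      rw [zero_sub, inner_sub_right, inner_neg_left, inner_neg_left]; ring
    rw [heq] at h; linarith
  -- representation of v as a nonnegative combination of the basis
  rw [hKdef, convexHull_range_eq_exists_affineCombination] at hvK
  obtain ⟨s, w, hw0, hw1, hvdef⟩ := hvK
  rw [Finset.affineCombination_eq_linear_combination _ _ _ hw1] at hvdef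
  set t : Fin r → ℝ := fun j => if j ∈ s then w j else 0 with ht
  have ht0 : ∀ j, 0 ≤ t j := by
    intro j
    by_cases h : j ∈ s
    · simpa [ht, h] using hw0 j h
    · simp [ht, h]
  have htsum : ∑ j, t j = 1 := by
    rw [← hw1]
    simp only [ht]
    rw [Finset.sum_ite_mem, Finset.univ_inter]
  have hveq : v = ∑ j, t j • (x j : E) := by
    rw [← hvdef]
    simp only [ht, ite_smul, zero_smul]
    rw [Finset.sum_ite_mem, Finset.univ_inter]
  have hvne : v ≠ 0 := by
    intro h
    have hz := Fintype.linearIndependent_iff.mp x.linearIndependent t (by rw [← hveq, h])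
    simp only [hz] at htsum
    simp at htsum
  have hδ : (0:ℝ) < inner ℝ v v := by
    rw [real_inner_self_eq_norm_sq]
    exact pow_pos (norm_pos_iff.mpr hvne) 2
  have htU : ∀ i, 0 < F t i := by
    intro i
    rw [← hinner, ← hveq]
    exact lt_of_lt_of_le hδ (hvi i)
  -- openness of the positivity region
  have hFcont : ∀ i, Continuous fun c : Fin r → ℝ => F c i := fun i =>
    continuous_finset_sum _ fun j _ => (continuous_apply j).mul continuous_const
  have hU0 : IsOpen {c : Fin r → ℝ | ∀ i, 0 < F c i} := by
    have hset : {c : Fin r → ℝ | ∀ i, 0 < F c i} = ⋂ i, (fun c => F c i) ⁻¹' Set.Ioi 0 := by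
      ext c; simp [Set.mem_iInter]
    rw [hset]
    exact isOpen_iInter_of_finite fun i => (hFcont i).isOpen_preimage _ isOpen_Ioi
  obtain ⟨ε₀, hε₀, hball₀⟩ := Metric.isOpen_iff.mp hU0 t htU
  set c₁ : Fin r → ℝ := fun j => t j + ε₀ / 2 with hc₁
  have hc₁pos : ∀ j, 0 < c₁ j := fun j => by
    have := ht0 j; simp only [hc₁]; linarith
  have hc₁U : ∀ i, 0 < F c₁ i := by
    apply hball₀
    rw [Metric.mem_ball, dist_pi_lt_iff hε₀]
    intro j
    rw [Real.dist_eq]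
    simp only [hc₁]
    rw [add_sub_cancel_left, abs_of_pos (by linarith)]
    linarith
  obtain ⟨ε₁, hε₁, hball₁⟩ := Metric.isOpen_iff.mp hU0 c₁ hc₁U
  obtain ⟨n, hn⟩ := exists_nat_one_div_lt hε₁
  set N : ℕ := n + 1 with hN
  have hNn : (N:ℝ) = (n:ℝ) + 1 := by rw [hN]; push_cast; ring
  have hNpos : (0:ℝ) < N := by rw [hNn]; positivity
  set m : Fin r → ℕ := fun j => ⌈(N : ℝ) * c₁ j⌉₊ with hm
  have hmpos : ∀ j, 0 < m j := fun j =>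
    Nat.ceil_pos.mpr (mul_pos hNpos (hc₁pos j))
  set c : Fin r → ℝ := fun j => (m j : ℝ) / N with hc
  have hcU : ∀ i, 0 < F c i := by
    apply hball₁
    rw [Metric.mem_ball, dist_pi_lt_iff hε₁]
    intro j
    have h1 : (N : ℝ) * c₁ j ≤ (m j : ℝ) := Nat.le_ceil _
    have h2 : (m j : ℝ) < (N : ℝ) * c₁ j + 1 :=
      Nat.ceil_lt_add_one (mul_pos hNpos (hc₁pos j)).le
    have h3 : (1:ℝ) < ε₁ * N := by
      rw [hNn]
      rw [div_lt_iff₀ (by positivity)] at hn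
      linarith
    rw [Real.dist_eq]
    simp only [hc]
    rw [abs_of_nonneg (by rw [sub_nonneg, le_div_iff₀ hNpos]; linarith)]
    rw [div_sub' (ne_of_gt hNpos), div_lt_iff₀ hNpos]
    linarith
  refine ⟨m, hmpos, fun i => ?_⟩
  have hmc : ∀ j, (m j : ℝ) = (N:ℝ) * c j := fun j => by
    simp only [hc]; field_simp
  have goal_eq : (inner ℝ (∑ j, (m j : ℝ) • (x j : E)) (x i) : ℝ) = (N:ℝ) * F c i := by
    rw [hinner]
    simp only [hF]
    rw [Finset.mul_sum]
    exact Finset.sum_congr rfl fun j _ => by rw [hmc j, mul_assoc]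
  rw [goal_eq]
  exact mul_pos hNpos (hcU i)
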